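/- Let Λ : ∂T → [0,1] be the map Λ(ζ) = Σ_{k≥1} ζ_k 2^{−k}, and define f : [0,1] → [0,1/2] by f(t) = cap^T(Λ^{−1}([0,t])). Then f is nondecreasing and continuous on [0,1], with f(0) = 0 and f(1) = 1/2. -/

import Mathlib

open scoped ENNReal NNReal
open Filter Topology

noncomputable section

/-- The vertex set of the dyadic tree `T`: finite binary strings. The boundary `∂T`
is the set of infinite binary sequences `ℕ → Bool`. `pre ζ k` is the prefix of
length `k` of the boundary point `ζ`. -/
def pre (ζ : ℕ → Bool) (k : ℕ) : List Bool := List.ofFn (fun i : Fin k => ζ i)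

/-- The tree condenser capacity `cap^T_n(E)`: the infimum of `Σ_x φ(x)²` over
`φ : T → [0,∞)` with `Iφ(ζ) = Σ_{x ∈ P(ζ)} φ(x) ≥ 1` on `E` and `φ(x) = 0`
whenever `d(x) ≤ n-1`.  For `n = 0` this is the tree capacity `cap^T(E)`. -/
noncomputable def treeCapN (n : ℕ) (E : Set (ℕ → Bool)) : ℝ≥0∞ :=
  sInf { c | ∃ φ : List Bool → ℝ≥0,
    (∀ ζ ∈ E, 1 ≤ ∑' k : ℕ, (φ (pre ζ k) : ℝ≥0∞)) ∧
    (∀ x : List Bool, x.length < n → φ x = 0) ∧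
    c = ∑' x : List Bool, (φ x : ℝ≥0∞) ^ 2 }

/-- The tree capacity `cap^T(E)` of a set `E ⊆ ∂T`. -/
noncomputable def treeCap (E : Set (ℕ → Bool)) : ℝ≥0∞ := treeCapN 0 E

/-- `Λ` at the level of the parameter: a binary sequence `ζ = (ζ_k)_{k ≥ 1}` is sent
to `t = Σ_{k≥1} ζ_k 2^{-k} ∈ [0,1]` (our sequences are indexed from `0`). -/
noncomputable def lamReal (ζ : ℕ → Bool) : ℝ :=
  ∑' k : ℕ, (if ζ k then ((2:ℝ) ^ (k+1))⁻¹ else 0)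

/-- The identification map `Λ : ∂T → 𝕋`, `ζ ↦ e^{2πit}` with `t = Σ_{k≥1} ζ_k 2^{-k}`. -/
noncomputable def lam (ζ : ℕ → Bool) : ℂ :=
  Complex.exp (2 * Real.pi * Complex.I * (lamReal ζ : ℂ))




lemma pre_zero (ζ : ℕ → Bool) : pre ζ 0 = [] := rfl

lemma length_pre (ζ : ℕ → Bool) (n : ℕ) : (pre ζ n).length = n := by
  simp [pre]

lemma pre_succ (ζ : ℕ → Bool) (n : ℕ) : pre ζ (n+1) = pre ζ n ++ [ζ n] := by
  rw [pre, List.ofFn_succ', List.concat_eq_append]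
  rfl

lemma pre_prefix (ζ : ℕ → Bool) {k n : ℕ} (h : k ≤ n) : pre ζ k <+: pre ζ n := by
  induction n with
  | zero => simp at h; simp [h]
  | succ n ih =>
    rcases Nat.lt_or_ge k (n+1) with h'|h'
    · exact (ih (Nat.lt_succ_iff.mp h')).trans ⟨[ζ n], (pre_succ ζ n).symm⟩
    · have : k = n + 1 := le_antisymm h h'
      simp [this]

/-- value of a binary string, most significant bit first -/
def valF : List Bool → ℕ
  | [] => 0
  | b :: l => (if b then 2 ^ l.length else 0) + valF l

lemma valF_lt (l : List Bool) : valF l < 2 ^ l.length := by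
  induction l with
  | nil => simp [valF]
  | cons b l ih =>
    simp only [valF, List.length_cons, pow_succ]
    cases b <;> simp <;> omega

lemma valF_concat (l : List Bool) (b : Bool) :
    valF (l ++ [b]) = 2 * valF l + (if b then 1 else 0) := by
  induction l with
  | nil => cases b <;> simp [valF]
  | cons c l ih =>
    simp only [List.cons_append, valF, ih, List.length_append, List.length_cons]
    cases c <;> simp <;> omega

lemma valF_inj : ∀ l l' : List Bool, l.length = l'.length → valF l = valF l' → l = l'
  | [], [], _, _ => rfl
  | b :: l, b' :: l', hlen, hval => by
    simp only [List.length_cons, Nat.add_right_cancel_iff] at hlen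
    have h1 := valF_lt l
    have h2 := valF_lt l'
    simp only [valF, hlen] at hval h1 h2 ⊢
    have hb : b = b' := by
      cases b <;> cases b' <;> simp_all <;> omega
    subst hb
    have : valF l = valF l' := by cases b <;> simp at hval <;> omega
    rw [valF_inj l l' hlen this]



lemma list_bij : Function.Bijective (fun p : Σ n : ℕ, (Fin n → Bool) => List.ofFn p.2) := by
  constructor
  · rintro ⟨n, v⟩ ⟨m, w⟩ h
    simp only at h
    have hnm : n = m := by
      have := congrArg List.length h
      simpa using this
    subst hnm
    simp [List.ofFn_injective h]
  · intro l
    exact ⟨⟨l.length, l.get⟩, List.ofFn_get l⟩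

lemma tsum_list_length (f : ℕ → ℝ≥0∞) :
    ∑' x : List Bool, f x.length = ∑' n : ℕ, 2 ^ n * f n := by
  rw [← (Equiv.ofBijective _ list_bij).tsum_eq (fun x : List Bool => f x.length)]
  have : ∀ p : Σ n : ℕ, (Fin n → Bool),
      f ((Equiv.ofBijective _ list_bij) p).length = f p.1 := by
    rintro ⟨n, v⟩; simp [Equiv.ofBijective]
  rw [tsum_congr this, ENNReal.tsum_sigma']
  congr 1
  funext n
  rw [tsum_fintype]
  simp [Finset.sum_const, Fintype.card_fun]

lemma tsum_list_pow (c : ℝ≥0∞) :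
    ∑' x : List Bool, c ^ x.length = ∑' n : ℕ, (2 * c) ^ n := by
  rw [tsum_list_length (fun n => c ^ n)]
  congr 1; funext n; rw [mul_pow]

lemma tsum_quarter : ∑' x : List Bool, (4⁻¹ : ℝ≥0∞) ^ x.length = 2 := by
  rw [tsum_list_pow]
  have : (2 : ℝ≥0∞) * 4⁻¹ = 2⁻¹ := by
    rw [show (4:ℝ≥0∞) = 2*2 by norm_num, ENNReal.mul_inv (by norm_num) (by norm_num)]
    rw [← mul_assoc, ENNReal.mul_inv_cancel (by norm_num) (by norm_num), one_mul]
  rw [this, ENNReal.tsum_geometric, ENNReal.one_sub_inv_two, inv_inv]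

lemma tsum_cons_split (g : List Bool → ℝ≥0∞) :
    ∑' l : List Bool, g l = g [] + ∑' p : Bool × List Bool, g (p.1 :: p.2) := by
  rw [ENNReal.tsum_eq_add_tsum_ite ([] : List Bool)]
  congr 1
  have hinj : Function.Injective (fun p : Bool × List Bool => p.1 :: p.2) := by
    rintro ⟨b, l⟩ ⟨c, m⟩ h; simpa using h
  have hsupp : Function.support (fun l : List Bool => if l = [] then (0:ℝ≥0∞) else g l)
      ⊆ Set.range (fun p : Bool × List Bool => p.1 :: p.2) := by
    intro x hx
    simp only [Function.mem_support, ne_eq, ite_eq_left_iff, not_forall] at hx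
    rcases x with _ | ⟨b, l⟩
    · simp at hx
    · exact ⟨(b, l), rfl⟩
  have h2 : (∑' x : List Bool, if x = [] then (0:ℝ≥0∞) else g x)
      = ∑' p : Bool × List Bool, g (p.1 :: p.2) := by
    rw [← hinj.tsum_eq hsupp]
    exact tsum_congr (by rintro ⟨b, l⟩; simp)
  refine Eq.trans (tsum_congr fun x => ?_) h2
  by_cases h : x = [] <;> simp [h]

def capSet (E : Set (ℕ → Bool)) : Set ℝ≥0∞ :=
  { c | ∃ φ : List Bool → ℝ≥0,
    (∀ ζ ∈ E, 1 ≤ ∑' k : ℕ, (φ (pre ζ k) : ℝ≥0∞)) ∧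
    (∀ x : List Bool, x.length < 0 → φ x = 0) ∧
    c = ∑' x : List Bool, (φ x : ℝ≥0∞) ^ 2 }

lemma treeCap_eq (E : Set (ℕ → Bool)) : treeCap E = sInf (capSet E) := rfl

lemma treeCap_le {E : Set (ℕ → Bool)} (φ : List Bool → ℝ≥0)
    (h1 : ∀ ζ ∈ E, 1 ≤ ∑' k : ℕ, (φ (pre ζ k) : ℝ≥0∞)) :
    treeCap E ≤ ∑' x : List Bool, (φ x : ℝ≥0∞) ^ 2 :=
  sInf_le ⟨φ, h1, fun _ h => absurd h (Nat.not_lt_zero _), rfl⟩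

lemma treeCap_mono {E F : Set (ℕ → Bool)} (h : E ⊆ F) : treeCap E ≤ treeCap F := by
  apply le_sInf
  rintro c ⟨φ, h1, h2, rfl⟩
  exact treeCap_le φ (fun ζ hζ => h1 ζ (h hζ))

lemma treeCap_union_le (A B : Set (ℕ → Bool)) :
    treeCap (A ∪ B) ≤ treeCap A + treeCap B := by
  have key : ∀ a ∈ capSet A, ∀ b ∈ capSet B, treeCap (A ∪ B) ≤ a + b := by
    rintro a ⟨φ, hφ, -, rfl⟩ b ⟨ψ, hψ, -, rfl⟩
    calc treeCap (A ∪ B) ≤ ∑' x : List Bool, ((φ ⊔ ψ) x : ℝ≥0∞) ^ 2 := by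
          apply treeCap_le
          rintro ζ (hζ | hζ)
          · exact le_trans (hφ ζ hζ) (ENNReal.tsum_le_tsum fun k => by
              simp only [Pi.sup_apply]; exact_mod_cast ENNReal.coe_le_coe.2 (le_sup_left))
          · exact le_trans (hψ ζ hζ) (ENNReal.tsum_le_tsum fun k => by
              simp only [Pi.sup_apply]; exact_mod_cast ENNReal.coe_le_coe.2 (le_sup_right))
      _ ≤ (∑' x : List Bool, (φ x : ℝ≥0∞) ^ 2) + ∑' x : List Bool, (ψ x : ℝ≥0∞) ^ 2 := by
          rw [← ENNReal.tsum_add]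
          apply ENNReal.tsum_le_tsum
          intro x
          simp only [Pi.sup_apply]
          rcases le_total (φ x) (ψ x) with h | h
          · rw [sup_eq_right.2 h]; exact le_add_self
          · rw [sup_eq_left.2 h]; exact le_self_add
  have heq : treeCap A + treeCap B = ⨅ a ∈ capSet A, ⨅ b ∈ capSet B, a + b := by
    rw [treeCap_eq, treeCap_eq, ENNReal.sInf_add]
    refine iInf_congr fun a => iInf_congr fun ha => ?_
    rw [add_comm, ENNReal.sInf_add]
    exact iInf_congr fun b => iInf_congr fun hb => add_comm _ _
  rw [heq]
  exact le_iInf₂ fun a ha => le_iInf₂ fun b hb => key a ha b hb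

lemma treeCap_shadow (p : List Bool) :
    treeCap {ζ | pre ζ p.length = p} ≤ ((p.length : ℝ≥0∞) + 1)⁻¹ := by
  set n := p.length with hn
  set c : ℝ≥0 := ((n : ℝ≥0) + 1)⁻¹ with hc
  have hcoe : ((c : ℝ≥0∞)) = ((n : ℝ≥0∞) + 1)⁻¹ := by
    rw [hc, ENNReal.coe_inv (ne_of_gt (by positivity))]
    push_cast
    rfl
  have hmul : ((n : ℝ≥0∞) + 1) * (c : ℝ≥0∞) = 1 := by
    rw [hcoe]
    refine ENNReal.mul_inv_cancel ?_ ?_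
    · simp
    · simp [ENNReal.add_eq_top]
  set φ : List Bool → ℝ≥0 := fun x => if x <+: p then c else 0 with hφ
  have hle := treeCap_le (E := {ζ | pre ζ n = p}) φ ?_
  · refine hle.trans ?_
    set S : Finset (List Bool) := (Finset.range (n+1)).image p.take with hS
    have hsupp : ∀ x ∉ S, ((φ x : ℝ≥0∞)) ^ 2 = 0 := by
      intro x hx
      have : ¬ x <+: p := by
        intro hpre
        refine hx ?_
        rw [hS]
        refine Finset.mem_image.2 ⟨x.length, ?_, (List.prefix_iff_eq_take.1 hpre).symm⟩
        simp [Nat.lt_succ_iff, hn ▸ hpre.length_le]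
      simp [hφ, this]
    rw [tsum_eq_sum hsupp]
    calc ∑ x ∈ S, ((φ x : ℝ≥0∞)) ^ 2 ≤ ∑ _x ∈ S, ((c : ℝ≥0∞)) ^ 2 := by
          refine Finset.sum_le_sum fun x _ => ?_
          by_cases h : x <+: p <;> simp [hφ, h]
      _ = S.card • ((c : ℝ≥0∞)) ^ 2 := by rw [Finset.sum_const]
      _ ≤ ((n : ℝ≥0∞) + 1) * ((c : ℝ≥0∞)) ^ 2 := by
          rw [nsmul_eq_mul]
          refine mul_le_mul_left ?_ _
          have hcard : S.card ≤ n + 1 :=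
            (Finset.card_image_le).trans (Finset.card_range _).le
          calc (S.card : ℝ≥0∞) ≤ ((n+1 : ℕ) : ℝ≥0∞) := Nat.cast_le.2 hcard
            _ = (n : ℝ≥0∞) + 1 := by push_cast; ring
      _ = (c : ℝ≥0∞) := by rw [sq, ← mul_assoc, hmul, one_mul]
      _ = ((n : ℝ≥0∞) + 1)⁻¹ := hcoe
  · intro ζ hζ
    have hpref : ∀ k ∈ Finset.range (n+1), ((c : ℝ≥0∞)) ≤ ((φ (pre ζ k) : ℝ≥0∞)) := by
      intro k hk
      have : pre ζ k <+: p := hζ ▸ pre_prefix ζ (Nat.lt_succ_iff.mp (Finset.mem_range.1 hk))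
      simp [hφ, this]
    calc (1:ℝ≥0∞) = ((n : ℝ≥0∞) + 1) * (c : ℝ≥0∞) := hmul.symm
      _ = ∑ _k ∈ Finset.range (n+1), (c : ℝ≥0∞) := by
          rw [Finset.sum_const, Finset.card_range, nsmul_eq_mul]; push_cast; ring
      _ ≤ ∑ k ∈ Finset.range (n+1), ((φ (pre ζ k) : ℝ≥0∞)) := Finset.sum_le_sum hpref
      _ ≤ ∑' k : ℕ, ((φ (pre ζ k) : ℝ≥0∞)) := ENNReal.sum_le_tsum _

lemma treeCap_val (n m : ℕ) :
    treeCap {ζ | valF (pre ζ n) = m} ≤ ((n : ℝ≥0∞) + 1)⁻¹ := by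
  rcases Set.eq_empty_or_nonempty {ζ | valF (pre ζ n) = m} with h | ⟨ζ₀, hζ₀⟩
  · rw [h]
    have := treeCap_shadow (List.replicate n false)
    simp only [List.length_replicate] at this
    exact (treeCap_mono (Set.empty_subset _)).trans this
  · have hsub : {ζ | valF (pre ζ n) = m} ⊆ {ζ | pre ζ (pre ζ₀ n).length = pre ζ₀ n} := by
      intro ζ hζ
      have : pre ζ n = pre ζ₀ n := by
        refine valF_inj _ _ (by simp [length_pre]) ?_
        rw [hζ, hζ₀]
      simp only [Set.mem_setOf_eq, length_pre]
      exact this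
    have := (treeCap_mono hsub).trans (treeCap_shadow (pre ζ₀ n))
    simpa [length_pre] using this

lemma half_pow_coe (l : ℕ) :
    (((2⁻¹ : ℝ≥0) ^ l * 2⁻¹ : ℝ≥0) : ℝ≥0∞) = (2⁻¹ : ℝ≥0∞) ^ l * 2⁻¹ := by
  push_cast [ENNReal.coe_inv (show (2:ℝ≥0) ≠ 0 by norm_num)]
  norm_num

lemma two_inv_sq : (2⁻¹ : ℝ≥0∞) * 2⁻¹ = 4⁻¹ := by
  rw [show (4:ℝ≥0∞) = 2*2 by norm_num, ENNReal.mul_inv (by norm_num) (by norm_num)]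

lemma two_mul_four_inv : (2 : ℝ≥0∞) * 4⁻¹ = 2⁻¹ := by
  rw [← two_inv_sq, ← mul_assoc, ENNReal.mul_inv_cancel (by norm_num) (by norm_num), one_mul]

lemma tsum_geom_half : ∑' k : ℕ, (2⁻¹ : ℝ≥0∞) ^ k = 2 := by
  rw [ENNReal.tsum_geometric, ENNReal.one_sub_inv_two, inv_inv]

lemma treeCap_le_half (E : Set (ℕ → Bool)) : treeCap E ≤ 2⁻¹ := by
  set φ : List Bool → ℝ≥0 := fun x => (2⁻¹ : ℝ≥0) ^ x.length * 2⁻¹ with hφ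
  have hle := treeCap_le (E := E) φ ?_
  · refine hle.trans ?_
    have h : ∀ x : List Bool, ((φ x : ℝ≥0∞)) ^ 2 = (4⁻¹ : ℝ≥0∞) ^ x.length * 4⁻¹ := by
      intro x
      rw [hφ, half_pow_coe, mul_pow, sq ((2⁻¹:ℝ≥0∞) ^ x.length), sq, two_inv_sq,
        ← two_inv_sq, mul_pow]
    rw [tsum_congr h, ENNReal.tsum_mul_right, tsum_quarter, two_mul_four_inv]
  · intro ζ _
    have h : ∀ k : ℕ, ((φ (pre ζ k) : ℝ≥0∞)) = (2⁻¹ : ℝ≥0∞) ^ k * 2⁻¹ := by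
      intro k
      rw [hφ]; simp only [length_pre]; rw [half_pow_coe]
    rw [tsum_congr h, ENNReal.tsum_mul_right, tsum_geom_half,
      ENNReal.mul_inv_cancel (by norm_num) (by norm_num)]

noncomputable def avg (ψ : List Bool → ℝ≥0∞) (x : List Bool) : ℝ≥0∞ :=
  ∑' l : List Bool, ψ (x ++ l) * (2⁻¹ : ℝ≥0∞) ^ l.length

lemma avg_rec (ψ : List Bool → ℝ≥0∞) (x : List Bool) :
    avg ψ x = ψ x + (2⁻¹ * avg ψ (x ++ [false]) + 2⁻¹ * avg ψ (x ++ [true])) := by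
  rw [avg, tsum_cons_split (fun l => ψ (x ++ l) * (2⁻¹:ℝ≥0∞) ^ l.length)]
  congr 1
  · simp
  have hb : ∀ b : Bool, (∑' l : List Bool, ψ (x ++ b :: l) * (2⁻¹:ℝ≥0∞) ^ (b :: l).length)
      = 2⁻¹ * avg ψ (x ++ [b]) := by
    intro b
    rw [avg, ← ENNReal.tsum_mul_left]
    refine tsum_congr fun l => ?_
    rw [show x ++ b :: l = (x ++ [b]) ++ l by simp, List.length_cons, pow_succ]
    ring
  rw [ENNReal.tsum_prod (f := fun b (l : List Bool) => ψ (x ++ b :: l) * (2⁻¹:ℝ≥0∞) ^ (b :: l).length),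
    tsum_bool (fun b => ∑' l : List Bool, ψ (x ++ b :: l) * (2⁻¹:ℝ≥0∞) ^ (b :: l).length),
    hb false, hb true]

noncomputable def greedy (A : List Bool → ℝ≥0∞) : ℕ → List Bool
  | 0 => []
  | n+1 => greedy A n ++ [!decide (A (greedy A n ++ [false]) ≤ A (greedy A n ++ [true]))]

noncomputable def greedyRay (A : List Bool → ℝ≥0∞) (n : ℕ) : Bool :=
  !decide (A (greedy A n ++ [false]) ≤ A (greedy A n ++ [true]))

lemma greedy_succ (A : List Bool → ℝ≥0∞) (n : ℕ) :
    greedy A (n+1) = greedy A n ++ [greedyRay A n] := rfl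

lemma pre_greedy (A : List Bool → ℝ≥0∞) (n : ℕ) :
    pre (greedyRay A) n = greedy A n := by
  induction n with
  | zero => rfl
  | succ n ih => rw [pre_succ, ih, ← greedy_succ]

lemma avg_greedy_step (ψ : List Bool → ℝ≥0∞) (n : ℕ) :
    ψ (greedy (avg ψ) n) + avg ψ (greedy (avg ψ) (n+1)) ≤ avg ψ (greedy (avg ψ) n) := by
  set A := avg ψ with hA
  set x := greedy A n with hx
  have hmin : A (greedy A (n+1)) = min (A (x ++ [false])) (A (x ++ [true])) := by
    rw [greedy_succ, greedyRay]
    by_cases h : A (x ++ [false]) ≤ A (x ++ [true])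
    · simp [← hx, h, min_eq_left h]
    · simp [← hx, h, min_eq_right (le_of_not_ge h)]
  rw [hmin]
  nth_rewrite 3 [hA]
  rw [avg_rec ψ x, ← hA]
  refine add_le_add_right ?_ _
  have h1 : min (A (x ++ [false])) (A (x ++ [true]))
      = 2⁻¹ * min (A (x ++ [false])) (A (x ++ [true]))
        + 2⁻¹ * min (A (x ++ [false])) (A (x ++ [true])) := by
    rw [← add_mul, ENNReal.inv_two_add_inv_two, one_mul]
  rw [h1]
  exact add_le_add (mul_le_mul_right (min_le_left _ _) _)
    (mul_le_mul_right (min_le_right _ _) _)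

lemma one_le_avg (ψ : List Bool → ℝ≥0∞)
    (h : ∀ ζ : ℕ → Bool, 1 ≤ ∑' k : ℕ, ψ (pre ζ k)) : 1 ≤ avg ψ [] := by
  set A := avg ψ with hA
  have inv : ∀ n, (∑ k ∈ Finset.range n, ψ (greedy A k)) + A (greedy A n) ≤ A [] := by
    intro n
    induction n with
    | zero => simp [greedy]
    | succ n ih =>
      rw [Finset.sum_range_succ, add_assoc]
      exact le_trans (add_le_add_right (avg_greedy_step ψ n) _) ih
  have hpart : ∀ n, ∑ k ∈ Finset.range n, ψ (pre (greedyRay A) k) ≤ A [] := by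
    intro n
    have : ∑ k ∈ Finset.range n, ψ (pre (greedyRay A) k)
        = ∑ k ∈ Finset.range n, ψ (greedy A k) :=
      Finset.sum_congr rfl fun k _ => by rw [pre_greedy]
    rw [this]
    exact le_trans le_self_add (inv n)
  calc (1:ℝ≥0∞) ≤ ∑' k : ℕ, ψ (pre (greedyRay A) k) := h _
    _ = ⨆ n, ∑ k ∈ Finset.range n, ψ (pre (greedyRay A) k) := ENNReal.tsum_eq_iSup_nat
    _ ≤ A [] := iSup_le hpart

lemma amgm (a : ℝ≥0) (n : ℕ) :
    (a : ℝ≥0∞) * (2⁻¹:ℝ≥0∞) ^ n ≤ (a : ℝ≥0∞) ^ 2 + (4⁻¹:ℝ≥0∞) ^ n * 4⁻¹ := by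
  have hreal : (a:ℝ) * (2⁻¹:ℝ) ^ n ≤ (a:ℝ) ^ 2 + (4⁻¹:ℝ) ^ n * 4⁻¹ := by
    have h4 : ((4⁻¹:ℝ)) ^ n = ((2⁻¹:ℝ) ^ n) ^ 2 := by
      rw [← pow_mul, mul_comm, pow_mul]; norm_num
    nlinarith [sq_nonneg ((a:ℝ) - (2⁻¹:ℝ)^n / 2), pow_nonneg (by norm_num : (0:ℝ) ≤ 2⁻¹) n]
  have hnn : a * (2⁻¹:ℝ≥0) ^ n ≤ a ^ 2 + (4⁻¹:ℝ≥0) ^ n * 4⁻¹ := by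
    rw [← NNReal.coe_le_coe]; push_cast; exact hreal
  calc (a : ℝ≥0∞) * (2⁻¹:ℝ≥0∞) ^ n = ((a * (2⁻¹:ℝ≥0) ^ n : ℝ≥0) : ℝ≥0∞) := by
        push_cast [ENNReal.coe_inv (show (2:ℝ≥0) ≠ 0 by norm_num)]; rfl
    _ ≤ ((a ^ 2 + (4⁻¹:ℝ≥0) ^ n * 4⁻¹ : ℝ≥0) : ℝ≥0∞) := ENNReal.coe_le_coe.2 hnn
    _ = (a : ℝ≥0∞) ^ 2 + (4⁻¹:ℝ≥0∞) ^ n * 4⁻¹ := by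
        push_cast [ENNReal.coe_inv (show (4:ℝ≥0) ≠ 0 by norm_num)]; rfl

lemma energy_ge_half (ψ : List Bool → ℝ≥0)
    (h : ∀ ζ : ℕ → Bool, 1 ≤ ∑' k : ℕ, ((ψ (pre ζ k) : ℝ≥0∞))) :
    2⁻¹ ≤ ∑' x : List Bool, ((ψ x : ℝ≥0∞)) ^ 2 := by
  have h1 : 1 ≤ avg (fun x => (ψ x : ℝ≥0∞)) [] := one_le_avg _ h
  have h2 : avg (fun x => (ψ x : ℝ≥0∞)) [] ≤ (∑' x : List Bool, ((ψ x : ℝ≥0∞)) ^ 2) + 2⁻¹ := by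
    rw [avg]
    simp only [List.nil_append]
    calc ∑' l : List Bool, (ψ l : ℝ≥0∞) * (2⁻¹:ℝ≥0∞) ^ l.length
        ≤ ∑' l : List Bool, (((ψ l : ℝ≥0∞)) ^ 2 + (4⁻¹:ℝ≥0∞) ^ l.length * 4⁻¹) :=
          ENNReal.tsum_le_tsum fun l => amgm (ψ l) l.length
      _ = (∑' l : List Bool, ((ψ l : ℝ≥0∞)) ^ 2)
          + (∑' l : List Bool, (4⁻¹:ℝ≥0∞) ^ l.length) * 4⁻¹ := by
          rw [ENNReal.tsum_add, ENNReal.tsum_mul_right]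
      _ = (∑' l : List Bool, ((ψ l : ℝ≥0∞)) ^ 2) + 2⁻¹ := by
          rw [tsum_quarter, two_mul_four_inv]
  by_contra hlt
  push_neg at hlt
  have : (1:ℝ≥0∞) < 1 := by
    calc (1:ℝ≥0∞) ≤ (∑' x : List Bool, ((ψ x : ℝ≥0∞)) ^ 2) + 2⁻¹ := le_trans h1 h2
      _ < 2⁻¹ + 2⁻¹ := ENNReal.add_lt_add_right (by norm_num) hlt
      _ = 1 := ENNReal.inv_two_add_inv_two
  exact lt_irrefl _ this

lemma lamReal_term_le (ζ : ℕ → Bool) (k : ℕ) :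
    (if ζ k then ((2:ℝ) ^ (k+1))⁻¹ else 0) ≤ ((2:ℝ) ^ (k+1))⁻¹ := by
  by_cases h : ζ k <;> simp [h]

lemma lamReal_term_nonneg (ζ : ℕ → Bool) (k : ℕ) :
    0 ≤ (if ζ k then ((2:ℝ) ^ (k+1))⁻¹ else 0) := by
  split <;> positivity

lemma geom_summable : Summable (fun k : ℕ => ((2:ℝ) ^ (k+1))⁻¹) := by
  have : (fun k : ℕ => ((2:ℝ) ^ (k+1))⁻¹) = fun k : ℕ => 1/2/2^k := by
    funext k; rw [pow_succ]; field_simp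
  rw [this]
  exact (summable_geometric_two).div_const 2 |>.congr (fun k => by simp [div_eq_mul_inv, mul_comm])

lemma geom_tsum : ∑' k : ℕ, ((2:ℝ) ^ (k+1))⁻¹ = 1 := by
  have : (fun k : ℕ => ((2:ℝ) ^ (k+1))⁻¹) = fun k : ℕ => 1/2/2^k := by
    funext k; rw [pow_succ]; field_simp
  rw [this, tsum_geometric_two' 1]

lemma lamReal_summable (ζ : ℕ → Bool) :
    Summable (fun k : ℕ => if ζ k then ((2:ℝ) ^ (k+1))⁻¹ else 0) :=
  Summable.of_nonneg_of_le (lamReal_term_nonneg ζ) (lamReal_term_le ζ) geom_summable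

lemma lamReal_nonneg (ζ : ℕ → Bool) : 0 ≤ lamReal ζ :=
  tsum_nonneg (lamReal_term_nonneg ζ)

lemma lamReal_le_one (ζ : ℕ → Bool) : lamReal ζ ≤ 1 := by
  rw [lamReal, ← geom_tsum]
  exact Summable.tsum_le_tsum (lamReal_term_le ζ) (lamReal_summable ζ) geom_summable

lemma lamReal_eq_zero {ζ : ℕ → Bool} (h : lamReal ζ = 0) (k : ℕ) : ζ k = false := by
  by_contra hk
  have hk' : ζ k = true := by simpa using hk
  have hle : ((2:ℝ) ^ (k+1))⁻¹ ≤ lamReal ζ := by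
    have := Summable.le_tsum (lamReal_summable ζ) k (fun j _ => lamReal_term_nonneg ζ j)
    simpa [hk', lamReal] using this
  rw [h] at hle
  have : (0:ℝ) < ((2:ℝ) ^ (k+1))⁻¹ := by positivity
  linarith

lemma lamReal_partial (ζ : ℕ → Bool) (n : ℕ) :
    ∑ k ∈ Finset.range n, (if ζ k then ((2:ℝ) ^ (k+1))⁻¹ else 0)
      = (valF (pre ζ n) : ℝ) / 2 ^ n := by
  induction n with
  | zero => simp [pre_zero, valF]
  | succ n ih =>
    rw [Finset.sum_range_succ, ih, pre_succ, valF_concat]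
    cases hb : ζ n <;> (push_cast; simp [hb, length_pre]; field_simp; ring)

lemma lamReal_ge (ζ : ℕ → Bool) (n : ℕ) :
    (valF (pre ζ n) : ℝ) / 2 ^ n ≤ lamReal ζ := by
  rw [← lamReal_partial ζ n, lamReal]
  exact Summable.sum_le_tsum (Finset.range n) (fun k _ => lamReal_term_nonneg ζ k) (lamReal_summable ζ)

lemma lamReal_le (ζ : ℕ → Bool) (n : ℕ) :
    lamReal ζ ≤ (valF (pre ζ n) : ℝ) / 2 ^ n + ((2:ℝ) ^ n)⁻¹ := by
  rw [← lamReal_partial ζ n, lamReal,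
    ← Summable.sum_add_tsum_nat_add n (lamReal_summable ζ)]
  refine add_le_add_right ?_ _
  have htail : ∑' k : ℕ, ((2:ℝ) ^ (k + n + 1))⁻¹ = ((2:ℝ) ^ n)⁻¹ := by
    have heq : (fun k : ℕ => ((2:ℝ) ^ (k + n + 1))⁻¹)
        = fun k : ℕ => ((2:ℝ) ^ n)⁻¹ * ((2:ℝ) ^ (k+1))⁻¹ := by
      funext k
      rw [show k + n + 1 = n + (k + 1) by ring, pow_add, mul_inv]
    rw [heq, tsum_mul_left, geom_tsum, mul_one]
  calc (∑' k : ℕ, if ζ (k + n) then ((2:ℝ) ^ (k + n + 1))⁻¹ else 0)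
      ≤ ∑' k : ℕ, ((2:ℝ) ^ (k + n + 1))⁻¹ := by
        refine Summable.tsum_le_tsum (fun k => lamReal_term_le ζ (k+n)) ?_ ?_
        · exact (lamReal_summable ζ).comp_injective (add_left_injective n)
        · exact geom_summable.comp_injective (add_left_injective n) |>.congr (fun k => by rfl)
    _ = ((2:ℝ) ^ n)⁻¹ := htail

lemma treeCap_strip (n : ℕ) {s t : ℝ} (hs : 0 ≤ s) (h : t ≤ s + ((2:ℝ) ^ n)⁻¹) :
    treeCap (lamReal ⁻¹' Set.Icc s t) ≤ 3 * ((n : ℝ≥0∞) + 1)⁻¹ := by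
  set j := ⌊s * 2 ^ n⌋₊ with hj
  have hsub : lamReal ⁻¹' Set.Icc s t ⊆
      {ζ | valF (pre ζ n) = j - 1} ∪ ({ζ | valF (pre ζ n) = j} ∪ {ζ | valF (pre ζ n) = j + 1}) := by
    intro ζ hζ
    obtain ⟨h1, h2⟩ := hζ
    set m := valF (pre ζ n) with hm
    have hb1 : (m : ℝ) / 2 ^ n ≤ lamReal ζ := lamReal_ge ζ n
    have hb2 : lamReal ζ ≤ (m : ℝ) / 2 ^ n + ((2:ℝ) ^ n)⁻¹ := lamReal_le ζ n
    have hp : (0:ℝ) < 2 ^ n := by positivity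
    have hm1 : (m : ℝ) ≤ s * 2 ^ n + 1 := by
      have hmt : (m : ℝ) / 2 ^ n ≤ t := le_trans hb1 h2
      have h1' : (m : ℝ) / 2 ^ n ≤ s + ((2:ℝ) ^ n)⁻¹ := le_trans hmt h
      have := (div_le_iff₀ hp).1 h1'
      calc (m : ℝ) ≤ (s + ((2:ℝ) ^ n)⁻¹) * 2 ^ n := this
        _ = s * 2 ^ n + 1 := by field_simp
    have hm2 : s * 2 ^ n ≤ (m : ℝ) + 1 := by
      have hsm : s ≤ (m : ℝ) / 2 ^ n + ((2:ℝ) ^ n)⁻¹ := le_trans h1 hb2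
      have := mul_le_mul_of_nonneg_right hsm hp.le
      calc s * 2 ^ n ≤ ((m : ℝ) / 2 ^ n + ((2:ℝ) ^ n)⁻¹) * 2 ^ n := this
        _ = (m : ℝ) + 1 := by field_simp
    have hj1 : (j : ℝ) ≤ s * 2 ^ n := Nat.floor_le (by positivity)
    have hj2 : s * 2 ^ n < (j : ℝ) + 1 := Nat.lt_floor_add_one _
    have hmj1 : m ≤ j + 1 := by
      have : (m : ℝ) < (j : ℝ) + 2 := by linarith
      have : (m : ℝ) < ((j + 2 : ℕ) : ℝ) := by push_cast; linarith
      have := Nat.cast_lt.1 this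
      omega
    have hmj2 : j ≤ m + 1 := by
      have : (j : ℝ) ≤ (m : ℝ) + 1 := by linarith
      have : (j : ℝ) ≤ ((m + 1 : ℕ) : ℝ) := by push_cast; linarith
      exact Nat.cast_le.1 this
    have : m = j - 1 ∨ m = j ∨ m = j + 1 := by omega
    rcases this with h' | h' | h'
    · exact Or.inl h'
    · exact Or.inr (Or.inl h')
    · exact Or.inr (Or.inr h')
  refine (treeCap_mono hsub).trans ?_
  refine (treeCap_union_le _ _).trans ?_
  have hstep : ∀ m : ℕ, treeCap {ζ | valF (pre ζ n) = m} ≤ ((n : ℝ≥0∞) + 1)⁻¹ := treeCap_val n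
  calc treeCap {ζ | valF (pre ζ n) = j - 1}
        + treeCap ({ζ | valF (pre ζ n) = j} ∪ {ζ | valF (pre ζ n) = j + 1})
      ≤ ((n : ℝ≥0∞) + 1)⁻¹ + (((n : ℝ≥0∞) + 1)⁻¹ + ((n : ℝ≥0∞) + 1)⁻¹) := by
        refine add_le_add (hstep _) ?_
        exact (treeCap_union_le _ _).trans (add_le_add (hstep _) (hstep _))
    _ = 3 * ((n : ℝ≥0∞) + 1)⁻¹ := by ring

lemma cap_zero : treeCap (lamReal ⁻¹' Set.Icc 0 0) = 0 := by
  have hb : ∀ n : ℕ, treeCap (lamReal ⁻¹' Set.Icc 0 0) ≤ ((n : ℝ≥0∞) + 1)⁻¹ := by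
    intro n
    have hsub : lamReal ⁻¹' Set.Icc 0 0 ⊆ {ζ | pre ζ n = List.replicate n false} := by
      intro ζ hζ
      have h0 : lamReal ζ = 0 := le_antisymm hζ.2 hζ.1
      have : (fun i : Fin n => ζ i) = fun _ => false :=
        funext fun i => lamReal_eq_zero h0 i
      simp only [Set.mem_setOf_eq, pre, this, List.ofFn_const]
    have hsh := treeCap_shadow (List.replicate n false)
    simp only [List.length_replicate] at hsh
    exact (treeCap_mono hsub).trans hsh
  by_contra h0
  obtain ⟨n, hn⟩ := ENNReal.exists_inv_nat_lt h0
  have h2 : ((n : ℝ≥0∞) + 1)⁻¹ ≤ (n : ℝ≥0∞)⁻¹ := by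
    gcongr
    exact le_self_add
  exact absurd ((hb n).trans h2) (not_le.2 hn)

lemma cap_one : treeCap (lamReal ⁻¹' Set.Icc 0 1) = 2⁻¹ := by
  refine le_antisymm (treeCap_le_half _) ?_
  rw [treeCap_eq]
  apply le_sInf
  rintro c ⟨φ, h1, -, rfl⟩
  exact energy_ge_half φ (fun ζ => h1 ζ ⟨lamReal_nonneg ζ, lamReal_le_one ζ⟩)

lemma treeCap_ne_top (E : Set (ℕ → Bool)) : treeCap E ≠ ⊤ :=
  ((treeCap_le_half E).trans_lt (by norm_num)).ne

lemma f_diff (n : ℕ) {s t : ℝ} (hs : 0 ≤ s) (h : t ≤ s + ((2:ℝ) ^ n)⁻¹) :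
    (treeCap (lamReal ⁻¹' Set.Icc 0 t)).toReal
      ≤ (treeCap (lamReal ⁻¹' Set.Icc 0 s)).toReal + 3 / ((n:ℝ) + 1) := by
  have hsub : lamReal ⁻¹' Set.Icc 0 t
      ⊆ (lamReal ⁻¹' Set.Icc 0 s) ∪ (lamReal ⁻¹' Set.Icc s t) := by
    intro ζ hζ
    rcases le_total (lamReal ζ) s with h' | h'
    · exact Or.inl ⟨hζ.1, h'⟩
    · exact Or.inr ⟨h', hζ.2⟩
  have hcap : treeCap (lamReal ⁻¹' Set.Icc 0 t)
      ≤ treeCap (lamReal ⁻¹' Set.Icc 0 s) + 3 * ((n:ℝ≥0∞) + 1)⁻¹ :=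
    (treeCap_mono hsub).trans ((treeCap_union_le _ _).trans
      (add_le_add le_rfl (treeCap_strip n hs h)))
  have hne1 : treeCap (lamReal ⁻¹' Set.Icc 0 s) ≠ ⊤ := treeCap_ne_top _
  have hne2 : (3 * ((n:ℝ≥0∞) + 1)⁻¹) ≠ ⊤ := by
    refine ENNReal.mul_ne_top (by norm_num) (ENNReal.inv_ne_top.2 ?_)
    simp
  calc (treeCap (lamReal ⁻¹' Set.Icc 0 t)).toReal
      ≤ (treeCap (lamReal ⁻¹' Set.Icc 0 s) + 3 * ((n:ℝ≥0∞) + 1)⁻¹).toReal :=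
        ENNReal.toReal_mono (ENNReal.add_ne_top.2 ⟨hne1, hne2⟩) hcap
    _ = (treeCap (lamReal ⁻¹' Set.Icc 0 s)).toReal + (3 * ((n:ℝ≥0∞) + 1)⁻¹).toReal :=
        ENNReal.toReal_add hne1 hne2
    _ = (treeCap (lamReal ⁻¹' Set.Icc 0 s)).toReal + 3 / ((n:ℝ) + 1) := by
        congr 1
        rw [ENNReal.toReal_mul, ENNReal.toReal_inv, div_eq_mul_inv,
          ENNReal.toReal_add (ENNReal.natCast_ne_top n) ENNReal.one_ne_top]
        simp


/-- Let `Λ : ∂T → [0,1]`, `Λ(ζ) = Σ_{k≥1} ζ_k 2^{-k}`, and define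
`f : [0,1] → [0,1/2]` by `f(t) = cap^T(Λ^{-1}([0,t]))`. Then `f` is nondecreasing and
continuous on `[0,1]`, with `f(0) = 0` and `f(1) = 1/2`. -/
theorem capacity_profile_continuous (f : ℝ → ℝ)
    (hf : ∀ t : ℝ, f t = (treeCap (lamReal ⁻¹' Set.Icc 0 t)).toReal) :
    MonotoneOn f (Set.Icc (0:ℝ) 1) ∧ ContinuousOn f (Set.Icc (0:ℝ) 1) ∧
      f 0 = 0 ∧ f 1 = 1/2 := by
  have hmono : MonotoneOn f (Set.Icc (0:ℝ) 1) := by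
    intro s _ t _ hst
    rw [hf s, hf t]
    exact ENNReal.toReal_mono (treeCap_ne_top _)
      (treeCap_mono (Set.preimage_mono (Set.Icc_subset_Icc le_rfl hst)))
  refine ⟨hmono, ?_, ?_, ?_⟩
  · rw [Metric.continuousOn_iff]
    intro x hx ε hε
    obtain ⟨n, hn⟩ := exists_nat_gt (3 / ε)
    refine ⟨((2:ℝ) ^ n)⁻¹, by positivity, fun y hy hdist => ?_⟩
    have h3 : 3 / ((n:ℝ) + 1) < ε := by
      rw [div_lt_iff₀ (by positivity)]
      rw [div_lt_iff₀ hε] at hn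
      nlinarith [hε]
    rw [Real.dist_eq] at hdist ⊢
    rcases le_total y x with hyx | hxy
    · have hkey := f_diff n hy.1 (t := x)
        (by have := abs_lt.1 hdist; linarith [this.1])
      rw [← hf, ← hf] at hkey
      have hle : f y ≤ f x := hmono hy hx hyx
      rw [abs_of_nonpos (by linarith)]
      have : f x - f y ≤ 3 / ((n:ℝ) + 1) := by linarith
      linarith
    · have hkey := f_diff n hx.1 (t := y)
        (by have := abs_lt.1 hdist; linarith [this.2])
      rw [← hf, ← hf] at hkey
      have hle : f x ≤ f y := hmono hx hy hxy
      rw [abs_of_nonneg (by linarith)]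
      have : f y - f x ≤ 3 / ((n:ℝ) + 1) := by linarith
      linarith
  · rw [hf 0, cap_zero]; simp
  · rw [hf 1, cap_one, ENNReal.toReal_inv]; norm_num
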